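/- Fix r ≥ 1 and weights w_0,…,w_{r−1} : ℕ → ℂ with Σ_{k=0}^∞ k^j |w_ℓ(k)| < ∞ for every j ∈ ℕ and every ℓ, assume the system is perfect, and for each multi-index m let P_m denote the unique monic m-orthogonal polynomial of degree |m|. Let n ∈ ℕ^r satisfy n_ℓ ≥ 1 for all ℓ and fix k ∈ {0,…,r−1}. Then for every ℓ the denominator D_ℓ := Σ_{m=0}^∞ P_{n−e_ℓ}(m)·(−m)_{n_ℓ−1}·w_ℓ(m) is nonzero, and, setting b_{n,k} := [coefficient of X^{|n|−1} in P_n] − [coefficient of X^{|n|} in P_{n+e_k}] and d_{n,ℓ} := (Σ_{m=0}^∞ m·P_n(m)·(−m)_{n_ℓ−1}·w_ℓ(m)) / D_ℓ, the nearest neighbor recurrence relation (X − b_{n,k})·P_n(X) − P_{n+e_k}(X) = Σ_{ℓ=0}^{r−1} d_{n,ℓ}·P_{n−e_ℓ}(X) holds in ℂ[X]. -/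

import Mathlib

open Polynomial

/-- The rising Pochhammer symbol `(y)_m = y(y+1)⋯(y+m-1)`. -/
noncomputable def poch (y : ℂ) (m : ℕ) : ℂ := ∏ i ∈ Finset.range m, (y + i)

/-- `P` is `m`-orthogonal with respect to the discrete weights `w ℓ` on `ℕ`. -/
def IsMultiOrth {r : ℕ} (w : Fin r → ℕ → ℂ) (m : Fin r → ℕ) (P : Polynomial ℂ) : Prop :=
  ∀ ℓ : Fin r, ∀ q : Polynomial ℂ, q.degree < (m ℓ : WithBot ℕ) →
    ∑' k : ℕ, P.eval (k : ℂ) * q.eval (k : ℂ) * w ℓ k = 0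

namespace NNR

/-- pairing of a polynomial against a discrete weight -/
noncomputable def pair (w : ℕ → ℂ) (f : Polynomial ℂ) : ℂ :=
  ∑' m : ℕ, f.eval (m : ℂ) * w m

lemma summable_pw {w : ℕ → ℂ}
    (hm : ∀ j : ℕ, Summable (fun k : ℕ => (k : ℝ) ^ j * ‖w k‖))
    (f : Polynomial ℂ) : Summable (fun m : ℕ => f.eval (m : ℂ) * w m) := by
  have h : ∀ m : ℕ, f.eval (m : ℂ) * w m
      = ∑ j ∈ Finset.range (f.natDegree + 1), f.coeff j * (m : ℂ) ^ j * w m := by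
    intro m
    rw [Polynomial.eval_eq_sum_range, Finset.sum_mul]
  have S : Summable (fun m : ℕ =>
      ∑ j ∈ Finset.range (f.natDegree + 1), f.coeff j * (m : ℂ) ^ j * w m) := by
    apply summable_sum
    intro j _
    apply Summable.of_norm
    have hS := (hm j).mul_left ‖f.coeff j‖
    apply hS.congr
    intro m
    simp only [norm_mul, norm_pow, Complex.norm_natCast]
    ring
  exact S.congr (fun m => (h m).symm)

lemma pair_zero (w : ℕ → ℂ) : pair w 0 = 0 := by simp [pair]

lemma pair_add {w : ℕ → ℂ}
    (hm : ∀ j : ℕ, Summable (fun k : ℕ => (k : ℝ) ^ j * ‖w k‖))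
    (f g : Polynomial ℂ) : pair w (f + g) = pair w f + pair w g := by
  unfold pair
  rw [← Summable.tsum_add (summable_pw hm f) (summable_pw hm g)]
  exact tsum_congr fun m => by simp [add_mul]

lemma pair_sub {w : ℕ → ℂ}
    (hm : ∀ j : ℕ, Summable (fun k : ℕ => (k : ℝ) ^ j * ‖w k‖))
    (f g : Polynomial ℂ) : pair w (f - g) = pair w f - pair w g := by
  unfold pair
  rw [← Summable.tsum_sub (summable_pw hm f) (summable_pw hm g)]
  exact tsum_congr fun m => by simp [sub_mul]

lemma pair_smul (w : ℕ → ℂ) (c : ℂ) (f : Polynomial ℂ) :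
    pair w (C c * f) = c * pair w f := by
  unfold pair
  rw [← tsum_mul_left]
  exact tsum_congr fun m => by simp [mul_assoc]

lemma pair_sum {w : ℕ → ℂ}
    (hm : ∀ j : ℕ, Summable (fun k : ℕ => (k : ℝ) ^ j * ‖w k‖))
    {ι : Type*} (s : Finset ι) (f : ι → Polynomial ℂ) :
    pair w (∑ i ∈ s, f i) = ∑ i ∈ s, pair w (f i) := by
  classical
  induction s using Finset.induction with
  | empty => simp [pair_zero]
  | insert _ _ h ih =>
      rw [Finset.sum_insert h, Finset.sum_insert h, pair_add hm, ih]

/-- the polynomial whose value at `m` is `poch (-m) s` -/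
noncomputable def qpoch (s : ℕ) : Polynomial ℂ :=
  ∏ i ∈ Finset.range s, (C (i : ℂ) - X)

lemma qpoch_eval (s : ℕ) (m : ℕ) : (qpoch s).eval (m : ℂ) = poch (-(m : ℂ)) s := by
  simp only [qpoch, poch, eval_prod, eval_sub, eval_C, eval_X]
  exact Finset.prod_congr rfl fun i _ => by ring

lemma factor_eq (a : ℂ) : C a - X = -(X - C a) := by ring

lemma factor_ne_zero (a : ℂ) : C a - X ≠ 0 := by
  rw [factor_eq]; exact neg_ne_zero.2 (X_sub_C_ne_zero a)

lemma factor_natDegree (a : ℂ) : (C a - X).natDegree = 1 := by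
  rw [factor_eq, natDegree_neg, natDegree_X_sub_C]

lemma factor_leadingCoeff (a : ℂ) : (C a - X).leadingCoeff = -1 := by
  rw [factor_eq, leadingCoeff_neg, (monic_X_sub_C a).leadingCoeff]

lemma qpoch_ne_zero (s : ℕ) : qpoch s ≠ 0 :=
  Finset.prod_ne_zero_iff.2 fun i _ => factor_ne_zero _

lemma qpoch_natDegree (s : ℕ) : (qpoch s).natDegree = s := by
  rw [qpoch, natDegree_prod _ _ (fun i _ => factor_ne_zero _),
    Finset.sum_congr rfl (fun (i : ℕ) _ => factor_natDegree (i : ℂ))]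
  simp

lemma qpoch_degree (s : ℕ) : (qpoch s).degree = (s : WithBot ℕ) := by
  rw [degree_eq_natDegree (qpoch_ne_zero s), qpoch_natDegree]

lemma qpoch_leadingCoeff (s : ℕ) : (qpoch s).leadingCoeff = (-1 : ℂ) ^ s := by
  rw [qpoch, leadingCoeff_prod,
    Finset.prod_congr rfl (fun (i : ℕ) _ => factor_leadingCoeff (i : ℂ))]
  simp

/-- key extension step: orthogonality to degrees `< s-1` plus orthogonality
to `qpoch (s-1)` gives orthogonality to degrees `< s`. -/
lemma orth_step {w : ℕ → ℂ}
    (hm : ∀ j : ℕ, Summable (fun k : ℕ => (k : ℝ) ^ j * ‖w k‖))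
    (p : Polynomial ℂ) (s : ℕ) (hs : 1 ≤ s)
    (h1 : ∀ q : Polynomial ℂ, q.degree < ((s - 1 : ℕ) : WithBot ℕ) → pair w (p * q) = 0)
    (h2 : pair w (p * qpoch (s - 1)) = 0) :
    ∀ q : Polynomial ℂ, q.degree < (s : WithBot ℕ) → pair w (p * q) = 0 := by
  intro q hq
  set c : ℂ := q.coeff (s - 1) * ((-1 : ℂ) ^ (s - 1))⁻¹ with hc
  have hqr : (q - C c * qpoch (s - 1)).degree < ((s - 1 : ℕ) : WithBot ℕ) := by
    rw [degree_lt_iff_coeff_zero]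
    intro j hj
    rw [coeff_sub, coeff_C_mul]
    rcases eq_or_lt_of_le hj with h | h
    · have hcoe : (qpoch (s - 1)).coeff (s - 1) = (-1 : ℂ) ^ (s - 1) := by
        have := qpoch_leadingCoeff (s - 1)
        rwa [leadingCoeff, qpoch_natDegree] at this
      rw [← h, hcoe, hc]
      field_simp
      ring
    · have h1' : q.coeff j = 0 := by
        apply coeff_eq_zero_of_degree_lt
        exact lt_of_lt_of_le hq (by exact_mod_cast by omega)
      have h2' : (qpoch (s - 1)).coeff j = 0 := by
        apply coeff_eq_zero_of_natDegree_lt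
        rw [qpoch_natDegree]; omega
      simp [h1', h2']
  have hdec : p * q = p * (q - C c * qpoch (s - 1)) + C c * (p * qpoch (s - 1)) := by
    ring
  rw [hdec, pair_add hm, pair_smul, h1 _ hqr, h2, mul_zero, add_zero]

end NNR

namespace NNR

lemma degree_linear_mul_lt (b : ℂ) (q : Polynomial ℂ) (s : ℕ) (hs : 1 ≤ s)
    (hq : q.degree < ((s - 1 : ℕ) : WithBot ℕ)) :
    ((X - C b) * q).degree < (s : WithBot ℕ) := by
  rcases eq_or_ne q 0 with h | h
  · rw [h, mul_zero, degree_zero]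
    exact WithBot.bot_lt_coe s
  · rw [degree_mul, degree_X_sub_C, degree_eq_natDegree h] at *
    rw [Nat.cast_lt] at hq
    have : ((1 : ℕ) : WithBot ℕ) + (q.natDegree : WithBot ℕ)
        = ((1 + q.natDegree : ℕ) : WithBot ℕ) := by push_cast; ring
    rw [show ((1 : WithBot ℕ)) = ((1:ℕ) : WithBot ℕ) from rfl, this]
    exact_mod_cast by omega

end NNR


open NNR

/-- Nearest neighbor recurrence relation for type II discrete multiple
orthogonal polynomials of a perfect system: the denominators
`D_ℓ = ∑_m P_{n-e_ℓ}(m)(-m)_{n_ℓ-1} w_ℓ(m)` are nonzero and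
`(X - b_{n,k}) P_n - P_{n+e_k} = ∑_ℓ d_{n,ℓ} P_{n-e_ℓ}`. -/
theorem nearest_neighbor_recurrence (r : ℕ) (hr : 1 ≤ r) (w : Fin r → ℕ → ℂ)
    (hmom : ∀ j : ℕ, ∀ ℓ : Fin r,
      Summable (fun k : ℕ => (k : ℝ) ^ j * ‖w ℓ k‖))
    (P : (Fin r → ℕ) → Polynomial ℂ)
    (hP : ∀ m : Fin r → ℕ, (P m).Monic ∧ (P m).natDegree = ∑ i, m i ∧
      IsMultiOrth w m (P m) ∧
      ∀ Q : Polynomial ℂ, Q.Monic → Q.natDegree = ∑ i, m i → IsMultiOrth w m Q → Q = P m)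
    (n : Fin r → ℕ) (hn : ∀ ℓ, 1 ≤ n ℓ) (k : Fin r) :
    (∀ ℓ : Fin r,
      (∑' m : ℕ, (P (fun i => n i - if i = ℓ then 1 else 0)).eval (m : ℂ) *
        poch (-(m : ℂ)) (n ℓ - 1) * w ℓ m) ≠ 0) ∧
    ((X : Polynomial ℂ) - C ((P n).coeff ((∑ i, n i) - 1) -
          (P (fun i => n i + if i = k then 1 else 0)).coeff (∑ i, n i))) * P n -
        P (fun i => n i + if i = k then 1 else 0) =
      ∑ ℓ : Fin r,
        C ((∑' m : ℕ, (m : ℂ) * (P n).eval (m : ℂ) * poch (-(m : ℂ)) (n ℓ - 1) * w ℓ m) /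
            (∑' m : ℕ, (P (fun i => n i - if i = ℓ then 1 else 0)).eval (m : ℂ) *
              poch (-(m : ℂ)) (n ℓ - 1) * w ℓ m)) *
          P (fun i => n i - if i = ℓ then 1 else 0) := by
  classical
  have hm : ∀ ℓ : Fin r, ∀ j : ℕ,
      Summable (fun k : ℕ => (k : ℝ) ^ j * ‖w ℓ k‖) := fun ℓ j => hmom j ℓ
  -- basic data
  have hmono : ∀ m, (P m).Monic := fun m => (hP m).1
  have hdeg : ∀ m, (P m).natDegree = ∑ i, m i := fun m => (hP m).2.1
  -- orthogonality in `pair` language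
  have key : ∀ (m : Fin r → ℕ) (ℓ : Fin r) (q : Polynomial ℂ),
      q.degree < ((m ℓ : ℕ) : WithBot ℕ) → pair (w ℓ) (P m * q) = 0 := by
    intro m ℓ q hq
    have h := (hP m).2.2.1 ℓ q hq
    rw [pair, ← h]
    exact tsum_congr fun x => by rw [Polynomial.eval_mul]
  have orthIff : ∀ (m : Fin r → ℕ) (Q : Polynomial ℂ),
      (∀ ℓ q, q.degree < ((m ℓ : ℕ) : WithBot ℕ) → pair (w ℓ) (Q * q) = 0) →
      IsMultiOrth w m Q := by
    intro m Q h ℓ q hq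
    have := h ℓ q hq
    rw [pair] at this
    rw [← this]
    exact tsum_congr fun x => by rw [Polynomial.eval_mul]
  set N := ∑ i, n i with hN
  have hN1 : 1 ≤ N :=
    le_trans (hn k) (Finset.single_le_sum (fun i _ => Nat.zero_le _) (Finset.mem_univ k))
  clear_value N
  -- sums of the shifted multi-indices
  have hNsub : ∀ ℓ : Fin r, (∑ i, (n i - if i = ℓ then 1 else 0)) = N - 1 := by
    intro ℓ
    have h1 : ∀ i, (n i - if i = ℓ then 1 else 0) + (if i = ℓ then 1 else 0) = n i := by
      intro i; have := hn i; split <;> omega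
    have h2 : (∑ i, ((n i - if i = ℓ then 1 else 0) + (if i = ℓ then 1 else 0))) = N := by
      rw [Finset.sum_congr rfl fun i _ => h1 i, hN]
    rw [Finset.sum_add_distrib] at h2
    simp only [Finset.sum_ite_eq', Finset.mem_univ, if_true] at h2
    omega
  have hNadd : (∑ i, (n i + if i = k then 1 else 0)) = N + 1 := by
    rw [Finset.sum_add_distrib]
    simp [hN]
  -- the D and num quantities
  set D : Fin r → ℂ := fun ℓ =>
    pair (w ℓ) (P (fun i => n i - if i = ℓ then 1 else 0) * qpoch (n ℓ - 1)) with hD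
  set num : Fin r → ℂ := fun ℓ =>
    pair (w ℓ) (P n * (X * qpoch (n ℓ - 1))) with hnumdef
  have hD_eq : ∀ ℓ : Fin r,
      (∑' m : ℕ, (P (fun i => n i - if i = ℓ then 1 else 0)).eval (m : ℂ) *
        poch (-(m : ℂ)) (n ℓ - 1) * w ℓ m) = D ℓ := by
    intro ℓ
    exact tsum_congr fun x => by rw [Polynomial.eval_mul, qpoch_eval]
  have hnum_eq : ∀ ℓ : Fin r,
      (∑' m : ℕ, (m : ℂ) * (P n).eval (m : ℂ) * poch (-(m : ℂ)) (n ℓ - 1) * w ℓ m)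
        = num ℓ := by
    intro ℓ
    refine (tsum_congr fun x => ?_).symm
    rw [Polynomial.eval_mul, Polynomial.eval_mul, eval_X, qpoch_eval]
    ring
  -- degrees of the polynomials
  have hdegPn : (P n).degree = (N : WithBot ℕ) := by
    rw [degree_eq_natDegree (hmono n).ne_zero, hdeg n, hN]
  have hdegPs : ∀ ℓ : Fin r,
      (P (fun i => n i - if i = ℓ then 1 else 0)).degree = ((N - 1 : ℕ) : WithBot ℕ) := by
    intro ℓ
    rw [degree_eq_natDegree (hmono _).ne_zero, hdeg _, hNsub ℓ]
  -- orthogonality of P (n - e ℓ) against stuff of degree < (n - e ℓ) at any component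
  have keysub : ∀ (ℓ j : Fin r) (q : Polynomial ℂ),
      q.degree < (((n j - if j = ℓ then 1 else 0 : ℕ)) : WithBot ℕ) →
      pair (w j) (P (fun i => n i - if i = ℓ then 1 else 0) * q) = 0 := by
    intro ℓ j q hq
    exact key (fun i => n i - if i = ℓ then 1 else 0) j q hq
  -- Part 1 : D ℓ ≠ 0
  have hDne : ∀ ℓ : Fin r, D ℓ ≠ 0 := by
    intro ℓ hD0
    have horth : ∀ (j : Fin r) (q : Polynomial ℂ), q.degree < ((n j : ℕ) : WithBot ℕ) →
        pair (w j) (P (fun i => n i - if i = ℓ then 1 else 0) * q) = 0 := by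
      intro j q hq
      by_cases hj : j = ℓ
      · subst hj
        refine orth_step (hm j) _ (n j) (hn j) ?_ ?_ q hq
        · intro q' hq'
          exact keysub j j q' (by simpa using hq')
        · exact hD0
      · exact keysub ℓ j q (by simpa [hj] using hq)
    have hMO : IsMultiOrth w n (P n + P (fun i => n i - if i = ℓ then 1 else 0)) := by
      refine orthIff n _ (fun j q hq => ?_)
      rw [add_mul, pair_add (hm j), key n j q hq, horth j q hq, add_zero]
    have hlt : (P (fun i => n i - if i = ℓ then 1 else 0)).degree < (P n).degree := by
      rw [hdegPn, hdegPs ℓ]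
      exact_mod_cast by omega
    have hmonic : (P n + P (fun i => n i - if i = ℓ then 1 else 0)).Monic :=
      (hmono n).add_of_left hlt
    have hdeg' : (P n + P (fun i => n i - if i = ℓ then 1 else 0)).natDegree = ∑ i, n i :=
      (natDegree_eq_of_degree_eq (degree_add_eq_left_of_degree_lt hlt)).trans (hdeg n)
    have heq := (hP n).2.2.2 _ hmonic hdeg' hMO
    have h0 : P (fun i => n i - if i = ℓ then 1 else 0) = 0 := by
      have := add_eq_left.mp heq
      exact this
    exact (hmono _).ne_zero h0
  refine ⟨fun ℓ => by rw [hD_eq ℓ]; exact hDne ℓ, ?_⟩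
  -- Part 2 : the recurrence
  have hRHS : (∑ ℓ : Fin r,
      C ((∑' m : ℕ, (m : ℂ) * (P n).eval (m : ℂ) * poch (-(m : ℂ)) (n ℓ - 1) * w ℓ m) /
          (∑' m : ℕ, (P (fun i => n i - if i = ℓ then 1 else 0)).eval (m : ℂ) *
            poch (-(m : ℂ)) (n ℓ - 1) * w ℓ m)) *
        P (fun i => n i - if i = ℓ then 1 else 0)) =
      ∑ ℓ : Fin r, C (num ℓ / D ℓ) * P (fun i => n i - if i = ℓ then 1 else 0) :=
    Finset.sum_congr rfl fun ℓ _ => by rw [hD_eq ℓ, hnum_eq ℓ]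
  rw [hRHS]
  set b : ℂ := (P n).coeff (N - 1) -
    (P (fun i => n i + if i = k then 1 else 0)).coeff N with hb
  set Pa : Polynomial ℂ := P (fun i => n i + if i = k then 1 else 0) with hPa
  set d : Fin r → ℂ := fun ℓ => num ℓ / D ℓ with hd
  set Ps : Fin r → Polynomial ℂ := fun ℓ => P (fun i => n i - if i = ℓ then 1 else 0) with hPs
  rw [← sub_eq_zero]
  set R : Polynomial ℂ := ((X : Polynomial ℂ) - C b) * P n - Pa - ∑ ℓ, C (d ℓ) * Ps ℓ with hR
  -- degree of Q := (X - C b) * P n - Pa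
  have hcoeffPnN : (P n).coeff N = 1 := by
    have h := (hmono n).coeff_natDegree
    rw [hdeg n] at h
    rwa [hN]
  have hcoeffPa : Pa.coeff (N + 1) = 1 := by
    have h := (hmono (fun i => n i + if i = k then 1 else 0)).coeff_natDegree
    rw [hdeg (fun i => n i + if i = k then 1 else 0), hNadd] at h
    exact h
  have hdegPa : Pa.natDegree = N + 1 := by
    rw [hPa, hdeg (fun i => n i + if i = k then 1 else 0), hNadd]
  have hXP : ∀ j : ℕ, 1 ≤ j → ((X : Polynomial ℂ) * P n).coeff j = (P n).coeff (j - 1) := by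
    intro j hj
    conv_lhs => rw [show j = (j - 1) + 1 by omega]
    rw [coeff_X_mul]
  have hQdeg : (((X : Polynomial ℂ) - C b) * P n - Pa).degree < (N : WithBot ℕ) := by
    rw [degree_lt_iff_coeff_zero]
    intro j hj
    rw [coeff_sub, sub_mul, coeff_sub, coeff_C_mul]
    rcases Nat.lt_or_ge j (N + 2) with h | h
    · have hcases : j = N ∨ j = N + 1 := by omega
      rcases hcases with h' | h' <;> rw [h']
      · rw [hXP N hN1, hcoeffPnN, hb]
        ring
      · rw [hXP (N + 1) (by omega)]
        have h1 : (P n).coeff (N + 1 - 1) = 1 := by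
          simpa using hcoeffPnN
        have h2 : (P n).coeff (N + 1) = 0 :=
          coeff_eq_zero_of_natDegree_lt (by rw [hdeg n]; omega)
        rw [h1, h2, hcoeffPa]
        ring
    · have h1 : (P n).coeff (j - 1) = 0 :=
        coeff_eq_zero_of_natDegree_lt (by rw [hdeg n]; omega)
      have h2 : (P n).coeff j = 0 :=
        coeff_eq_zero_of_natDegree_lt (by rw [hdeg n]; omega)
      have h3 : Pa.coeff j = 0 :=
        coeff_eq_zero_of_natDegree_lt (by rw [hdegPa]; omega)
      rw [hXP j (by omega), h1, h2, h3]
      ring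
  -- degree of the sum
  have hSdeg : (∑ ℓ, C (d ℓ) * Ps ℓ).degree < (N : WithBot ℕ) := by
    refine lt_of_le_of_lt (degree_sum_le _ _) ?_
    refine (Finset.sup_lt_iff (WithBot.bot_lt_coe N)).2 fun ℓ _ => ?_
    refine lt_of_le_of_lt (degree_mul_le _ _) ?_
    refine lt_of_le_of_lt (add_le_add degree_C_le le_rfl) ?_
    rw [zero_add, hPs]
    rw [hdegPs ℓ]
    exact Nat.cast_lt.2 (by omega)
  have hRdeg : R.degree < (N : WithBot ℕ) := by
    rw [hR]
    exact lt_of_le_of_lt (degree_sub_le _ _) (max_lt hQdeg hSdeg)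
  -- expansion of R * q
  have hexp : ∀ q : Polynomial ℂ, R * q =
      (P n * (((X : Polynomial ℂ) - C b) * q) - Pa * q)
        - ∑ j, C (d j) * (Ps j * q) := by
    intro q
    rw [hR, sub_mul, sub_mul, Finset.sum_mul]
    have : ∀ j ∈ Finset.univ, (C (d j) * Ps j) * q = C (d j) * (Ps j * q) :=
      fun j _ => by ring
    rw [Finset.sum_congr rfl this]
    have h2 : ((X : Polynomial ℂ) - C b) * P n * q = P n * (((X : Polynomial ℂ) - C b) * q) := by
      ring
    rw [h2]
  -- small degree comparisons
  have hlow_na : ∀ ℓ : Fin r, ∀ q : Polynomial ℂ,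
      q.degree < (((n ℓ - 1 : ℕ)) : WithBot ℕ) → pair (w ℓ) (Pa * q) = 0 := by
    intro ℓ q hq
    refine key _ ℓ q (lt_of_lt_of_le hq ?_)
    exact_mod_cast by split <;> omega
  have hlow_ns : ∀ (j ℓ : Fin r) (q : Polynomial ℂ),
      q.degree < (((n ℓ - 1 : ℕ)) : WithBot ℕ) → pair (w ℓ) (Ps j * q) = 0 := by
    intro j ℓ q hq
    refine keysub j ℓ q (lt_of_lt_of_le hq ?_)
    exact_mod_cast by split <;> omega
  -- R-orthogonality at low degrees
  have hRlow : ∀ (ℓ : Fin r) (q : Polynomial ℂ),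
      q.degree < (((n ℓ - 1 : ℕ)) : WithBot ℕ) → pair (w ℓ) (R * q) = 0 := by
    intro ℓ q hq
    rw [hexp q, pair_sub (hm ℓ), pair_sub (hm ℓ), pair_sum (hm ℓ)]
    have h1 : pair (w ℓ) (P n * (((X : Polynomial ℂ) - C b) * q)) = 0 :=
      key n ℓ _ (degree_linear_mul_lt b q (n ℓ) (hn ℓ) hq)
    have h2 : pair (w ℓ) (Pa * q) = 0 := hlow_na ℓ q hq
    have h3 : (∑ j, pair (w ℓ) (C (d j) * (Ps j * q))) = 0 := by
      refine Finset.sum_eq_zero fun j _ => ?_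
      rw [pair_smul, hlow_ns j ℓ q hq, mul_zero]
    rw [h1, h2, h3]
    ring
  -- pairing of R against qpoch
  have hRpoch : ∀ ℓ : Fin r, pair (w ℓ) (R * qpoch (n ℓ - 1)) = 0 := by
    intro ℓ
    rw [hexp (qpoch (n ℓ - 1)), pair_sub (hm ℓ), pair_sub (hm ℓ), pair_sum (hm ℓ)]
    have hdq : (qpoch (n ℓ - 1)).degree = ((n ℓ - 1 : ℕ) : WithBot ℕ) := qpoch_degree _
    have h1 : pair (w ℓ) (P n * (((X : Polynomial ℂ) - C b) * qpoch (n ℓ - 1))) = num ℓ := by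
      have hsplit : P n * (((X : Polynomial ℂ) - C b) * qpoch (n ℓ - 1)) =
          P n * ((X : Polynomial ℂ) * qpoch (n ℓ - 1)) +
            C (-b) * (P n * qpoch (n ℓ - 1)) := by rw [map_neg]; ring
      rw [hsplit, pair_add (hm ℓ), pair_smul]
      have hz : pair (w ℓ) (P n * qpoch (n ℓ - 1)) = 0 := by
        refine key n ℓ _ ?_
        rw [hdq]
        exact Nat.cast_lt.2 (by have := hn ℓ; omega)
      rw [hz, mul_zero, add_zero, hnumdef]
    have h2 : pair (w ℓ) (Pa * qpoch (n ℓ - 1)) = 0 := by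
      refine key _ ℓ _ ?_
      rw [hdq]
      exact Nat.cast_lt.2 (by have := hn ℓ; split <;> omega)
    have h3 : (∑ j, pair (w ℓ) (C (d j) * (Ps j * qpoch (n ℓ - 1)))) = d ℓ * D ℓ := by
      have hterm : ∀ j : Fin r, pair (w ℓ) (C (d j) * (Ps j * qpoch (n ℓ - 1)))
          = if j = ℓ then d ℓ * D ℓ else 0 := by
        intro j
        rw [pair_smul]
        by_cases hj : j = ℓ
        · subst hj
          rw [if_pos rfl, hPs, hD]
        · rw [if_neg hj]
          have : pair (w ℓ) (Ps j * qpoch (n ℓ - 1)) = 0 := by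
            refine keysub j ℓ _ ?_
            rw [hdq]
            refine Nat.cast_lt.2 ?_
            rw [if_neg (Ne.symm hj)]
            have := hn ℓ
            omega
          rw [this, mul_zero]
      rw [Finset.sum_congr rfl fun j _ => hterm j]
      simp
    rw [h1, h2, h3]
    simp only [hd]
    rw [div_mul_cancel₀ _ (hDne ℓ)]
    ring
  -- R is n-orthogonal
  have hRorth : ∀ (ℓ : Fin r) (q : Polynomial ℂ), q.degree < ((n ℓ : ℕ) : WithBot ℕ) →
      pair (w ℓ) (R * q) = 0 := by
    intro ℓ
    exact orth_step (hm ℓ) R (n ℓ) (hn ℓ) (hRlow ℓ) (hRpoch ℓ)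
  -- uniqueness forces R = 0
  have hMO : IsMultiOrth w n (P n + R) := by
    refine orthIff n _ (fun j q hq => ?_)
    rw [add_mul, pair_add (hm j), key n j q hq, hRorth j q hq, add_zero]
  have hlt : R.degree < (P n).degree := by rw [hdegPn]; exact hRdeg
  have hmonic : (P n + R).Monic := (hmono n).add_of_left hlt
  have hdeg' : (P n + R).natDegree = ∑ i, n i :=
    (natDegree_eq_of_degree_eq (degree_add_eq_left_of_degree_lt hlt)).trans (hdeg n)
  have heq := (hP n).2.2.2 _ hmonic hdeg' hMO
  have hR0 : R = 0 := add_eq_left.mp heq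
  exact hR0
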